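/- Let p ≥ q ≥ 2 be integers, μ_q > 0, let f : E → ℝ be μ_q-uniformly star-convex of degree q with respect to a global minimizer x*, have L_p-Lipschitz-continuous p-th derivative, let M_p ≥ (p−1)·L_p, let x ∈ E, and let x⁺ be a basic p-th order tensor step from x with parameter M_p. Then for every α ∈ [0,1] satisfying α^p · (q(M_p+L_p)/((p+1)!·μ_q))·‖x − x*‖^{p−q+1} + α − 1 ≤ 0, one has f(x⁺) − f(x*) ≤ (1 − α)·(f(x) − f(x*)). -/

import Mathlib

open scoped RealInnerProductSpace

section
variable {E : Type*} [NormedAddCommGroup E] [InnerProductSpace ℝ E]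

/-- `f` is `μ`-uniformly star-convex of degree `q` with respect to `xs`. -/
def UniformlyStarConvex (f : E → ℝ) (xs : E) (q : ℕ) (μ : ℝ) : Prop :=
  ∀ x : E, ∀ α : ℝ, 0 ≤ α → α ≤ 1 →
    f (α • x + (1 - α) • xs) ≤
      α * f x + (1 - α) * f xs - α * (1 - α) * μ / q * ‖x - xs‖ ^ q

/-- `f` has `L`-Lipschitz-continuous `p`-th derivative. -/
def HasLipschitzDeriv (f : E → ℝ) (p : ℕ) (L : ℝ) : Prop :=
  ContDiff ℝ p f ∧
    ∀ x y : E, ‖iteratedFDeriv ℝ p f x - iteratedFDeriv ℝ p f y‖ ≤ L * ‖x - y‖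

/-- The `p`-th order Taylor polynomial `Φ_{x,p}(y)` of `f` at `x`. -/
noncomputable def taylorPoly (f : E → ℝ) (p : ℕ) (x y : E) : ℝ :=
  f x + ∑ k ∈ Finset.Icc 1 p,
    (1 / (Nat.factorial k : ℝ)) * iteratedFDeriv ℝ k f x (fun _ => y - x)

/-- The tensor model `Ω_{x,M}(y)`. -/
noncomputable def tensorModel (f : E → ℝ) (p : ℕ) (M : ℝ) (x y : E) : ℝ :=
  taylorPoly f p x y + M / (Nat.factorial (p + 1) : ℝ) * ‖y - x‖ ^ (p + 1)

/-- `xp` is a basic `p`-th order tensor step from `x` with parameter `M`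
(a global minimizer of the model). -/
def IsTensorStep (f : E → ℝ) (p : ℕ) (M : ℝ) (x xp : E) : Prop :=
  ∀ y : E, tensorModel f p M x xp ≤ tensorModel f p M x y

end


section
variable {E : Type*} [NormedAddCommGroup E] [InnerProductSpace ℝ E]
open Set in
theorem taylor_rem_bound (f : E → ℝ) (m : ℕ) (L : ℝ)
    (hf : ContDiff ℝ (m+1 : ℕ) f)
    (hL : ∀ x y : E, ‖iteratedFDeriv ℝ (m+1) f x - iteratedFDeriv ℝ (m+1) f y‖ ≤ L * ‖x - y‖)
    (x y : E) :
    |f y - taylorPoly f (m+1) x y| ≤ L / (Nat.factorial (m+2) : ℝ) * ‖y - x‖ ^ (m+2) := by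
  set v := y - x with hv
  set g : ℕ → ℝ → ℝ := fun k t => iteratedFDeriv ℝ k f (x + t • v) (fun _ => v) with hgdef
  -- derivative of g k
  have hg : ∀ k, k < m + 1 → ∀ t : ℝ, HasDerivAt (g k) (g (k+1) t) t := by
    intro k hk t
    have hγ : HasDerivAt (fun s : ℝ => x + s • v) v t := by
      simpa using ((hasDerivAt_id t).smul_const v).const_add x
    have hdiff : Differentiable ℝ (iteratedFDeriv ℝ k f) :=
      hf.differentiable_iteratedFDeriv (by exact_mod_cast hk)
    have h2 : HasDerivAt (fun s : ℝ => iteratedFDeriv ℝ k f (x + s • v))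
        (fderiv ℝ (iteratedFDeriv ℝ k f) (x + t • v) v) t :=
      (hdiff _).hasFDerivAt.comp_hasDerivAt t hγ
    exact (ContinuousMultilinearMap.apply ℝ (fun _ : Fin k => E) ℝ
      (fun _ => v)).hasFDerivAt.comp_hasDerivAt t h2
  -- Lipschitz bound on g (m+1)
  have hgl : ∀ t : ℝ, 0 ≤ t → |g (m+1) t - g (m+1) 0| ≤ L * ‖v‖ ^ (m+2) * t := by
    intro t ht
    have h1 : g (m+1) t - g (m+1) 0
        = (iteratedFDeriv ℝ (m+1) f (x + t • v) - iteratedFDeriv ℝ (m+1) f (x + (0:ℝ) • v))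
            (fun _ => v) := by
      simp [hgdef]
    rw [h1]
    calc _ ≤ ‖iteratedFDeriv ℝ (m+1) f (x + t • v) - iteratedFDeriv ℝ (m+1) f (x + (0:ℝ) • v)‖
        * ∏ _i : Fin (m+1), ‖v‖ :=
          (iteratedFDeriv ℝ (m+1) f (x + t • v) - iteratedFDeriv ℝ (m+1) f (x + (0:ℝ) • v)).le_opNorm _
      _ ≤ (L * ‖(x + t • v) - (x + (0:ℝ) • v)‖) * ‖v‖ ^ (m+1) := by
          rw [Finset.prod_const, Finset.card_fin]
          exact mul_le_mul_of_nonneg_right (hL _ _) (by positivity)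
      _ = L * ‖v‖ ^ (m+2) * t := by
          have : (x + t • v) - (x + (0:ℝ) • v) = t • v := by module
          rw [this, norm_smul, Real.norm_eq_abs, abs_of_nonneg ht]
          ring
  set F : ℕ → ℝ → ℝ := fun k t => (1-t)^k / (Nat.factorial k : ℝ) * g k t with hFdef
  set G : ℕ → ℝ → ℝ := fun k t =>
    if k = 0 then 0 else (1-t)^(k-1) / (Nat.factorial (k-1) : ℝ) * g k t with hGdef
  set φ : ℝ → ℝ := fun t => (∑ k ∈ Finset.range (m+1), F k t)
    + (1-t)^(m+1) / (Nat.factorial (m+1) : ℝ) * g (m+1) 0 with hφdef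
  have hF : ∀ k, k < m + 1 → ∀ t : ℝ, HasDerivAt (F k) (G (k+1) t - G k t) t := by
    intro k hk t
    have h1 : HasDerivAt (fun t : ℝ => 1 - t) (-1) t := (hasDerivAt_id t).const_sub 1
    have h2 : HasDerivAt (fun t : ℝ => (1-t)^k / (Nat.factorial k : ℝ))
        ((k * (1-t)^(k-1) * (-1)) / (Nat.factorial k : ℝ)) t := (h1.pow k).div_const _
    have h3 := h2.mul (hg k hk t)
    refine h3.congr_deriv (Eq.symm ?_)
    rcases Nat.eq_zero_or_pos k with hk0 | hk0
    · subst hk0; simp [hGdef]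
    · obtain ⟨j, rfl⟩ : ∃ j, k = j + 1 := ⟨k - 1, by omega⟩
      simp only [hGdef, Nat.add_sub_cancel, if_neg (Nat.succ_ne_zero j), Nat.succ_ne_zero,
        Nat.factorial_succ]
      push_cast
      have hj : (Nat.factorial j : ℝ) ≠ 0 := by positivity
      field_simp
      ring
  have hlast : ∀ t : ℝ, HasDerivAt (fun t : ℝ => (1-t)^(m+1) / (Nat.factorial (m+1) : ℝ) * g (m+1) 0)
      (-((1-t)^m / (Nat.factorial m : ℝ)) * g (m+1) 0) t := by
    intro t
    have h1 : HasDerivAt (fun t : ℝ => 1 - t) (-1) t := (hasDerivAt_id t).const_sub 1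
    have h2 := ((h1.pow (m+1)).div_const (Nat.factorial (m+1) : ℝ)).mul_const (g (m+1) 0)
    refine h2.congr_deriv (Eq.symm ?_)
    simp only [Nat.add_sub_cancel, Nat.factorial_succ]
    push_cast
    have hj : (Nat.factorial m : ℝ) ≠ 0 := by positivity
    field_simp
  have hφ : ∀ t : ℝ, HasDerivAt φ ((1-t)^m / (Nat.factorial m : ℝ) * (g (m+1) t - g (m+1) 0)) t := by
    intro t
    have hsum : HasDerivAt (fun t => ∑ k ∈ Finset.range (m+1), F k t)
        (∑ k ∈ Finset.range (m+1), (G (k+1) t - G k t)) t :=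
      HasDerivAt.fun_sum (fun k hk => hF k (Finset.mem_range.mp hk) t)
    have h := hsum.add (hlast t)
    refine h.congr_deriv (Eq.symm ?_)
    rw [Finset.sum_range_sub (f := fun k => G k t)]
    simp only [hGdef, Nat.add_sub_cancel, if_neg (Nat.succ_ne_zero m), if_pos rfl]
    try ring
  -- boundary function
  set c : ℝ := L * ‖v‖ ^ (m+2) / (Nat.factorial m : ℝ) with hcdef
  set B : ℝ → ℝ := fun t => c * ((1/(m+1 : ℝ) - (1-t)^(m+1)/(m+1 : ℝ))
    - (1/(m+2 : ℝ) - (1-t)^(m+2)/(m+2 : ℝ))) with hBdef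
  set B' : ℝ → ℝ := fun t => c * ((1-t)^m - (1-t)^(m+1)) with hB'def
  have hB : ∀ t : ℝ, HasDerivAt B (B' t) t := by
    intro t
    have h1 : HasDerivAt (fun t : ℝ => 1 - t) (-1) t := (hasDerivAt_id t).const_sub 1
    have h2 := ((((h1.pow (m+1)).div_const ((m:ℝ)+1)).const_sub (1/(m+1:ℝ))).sub
      (((h1.pow (m+2)).div_const ((m:ℝ)+2)).const_sub (1/(m+2:ℝ)))).const_mul c
    refine h2.congr_deriv (Eq.symm ?_)
    simp only [hB'def, Nat.add_sub_cancel]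
    have hm1 : ((m:ℝ)+1) ≠ 0 := by positivity
    have hm2 : ((m:ℝ)+2) ≠ 0 := by positivity
    push_cast
    field_simp
    try ring
  set ψ : ℝ → ℝ := fun t => φ t - φ 0 with hψdef
  have key : ∀ t ∈ Icc (0:ℝ) 1, ‖ψ t‖ ≤ B t := by
    have hcont : ContinuousOn ψ (Icc (0:ℝ) 1) :=
      fun t _ => (((hφ t).sub_const (φ 0)).continuousAt).continuousWithinAt
    have hderiv : ∀ t ∈ Ico (0:ℝ) 1, HasDerivWithinAt ψ
        ((1-t)^m / (Nat.factorial m : ℝ) * (g (m+1) t - g (m+1) 0)) (Ici t) t :=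
      fun t _ => ((hφ t).sub_const (φ 0)).hasDerivWithinAt
    have ha : ‖ψ 0‖ ≤ B 0 := by simp [hψdef, hBdef]
    have bound : ∀ t ∈ Ico (0:ℝ) 1,
        ‖(1-t)^m / (Nat.factorial m : ℝ) * (g (m+1) t - g (m+1) 0)‖ ≤ B' t := by
      intro t ht
      obtain ⟨ht0, ht1⟩ := ht
      have h1t : (0:ℝ) ≤ 1 - t := by linarith
      have hfac : (0:ℝ) < (Nat.factorial m : ℝ) := by positivity
      have hpos : (0:ℝ) ≤ (1-t)^m / (Nat.factorial m : ℝ) :=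
        div_nonneg (pow_nonneg h1t m) hfac.le
      rw [Real.norm_eq_abs, abs_mul, abs_of_nonneg hpos]
      calc (1-t)^m / (Nat.factorial m : ℝ) * |g (m+1) t - g (m+1) 0|
          ≤ (1-t)^m / (Nat.factorial m : ℝ) * (L * ‖v‖ ^ (m+2) * t) := by
            apply mul_le_mul_of_nonneg_left (hgl t ht0) hpos
        _ = B' t := by
            simp only [hB'def, hcdef, pow_succ]
            field_simp
            ring
    exact image_norm_le_of_norm_deriv_right_le_deriv_boundary hcont hderiv ha hB bound
  have hψ1 := key 1 (by norm_num)
  -- compute φ 1 = f y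
  have hφ1 : φ 1 = f y := by
    simp only [hφdef, hFdef]
    rw [Finset.sum_eq_single_of_mem 0 (Finset.mem_range.mpr (Nat.succ_pos m))]
    · simp [hgdef, hv, iteratedFDeriv_zero_apply]
    · intro k _ hk0
      obtain ⟨j, rfl⟩ : ∃ j, k = j + 1 := ⟨k - 1, by omega⟩
      simp [pow_succ]
  -- compute φ 0 = taylorPoly
  have hφ0 : φ 0 = taylorPoly f (m+1) x y := by
    have hstep1 : φ 0 = ∑ k ∈ Finset.range (m+2),
        1/(Nat.factorial k : ℝ) * iteratedFDeriv ℝ k f x (fun _ => y - x) := by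
      rw [Finset.sum_range_succ]
      simp [hφdef, hFdef, hgdef, hv]
    rw [hstep1, Finset.range_eq_Ico, Finset.sum_eq_sum_Ico_succ_bot (by omega : 0 < m+2)]
    rw [show Finset.Ico 1 (m+2) = Finset.Icc 1 (m+1) from Finset.Ico_add_one_right_eq_Icc 1 (m+1)]
    simp [taylorPoly, iteratedFDeriv_zero_apply]
  -- conclude
  have hfacs : (Nat.factorial (m+2) : ℝ) = ((m:ℝ)+2) * ((m:ℝ)+1) * (Nat.factorial m : ℝ) := by
    rw [Nat.factorial_succ, Nat.factorial_succ]
    push_cast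
    ring
  have hB1 : B 1 = L / (Nat.factorial (m+2) : ℝ) * ‖v‖ ^ (m+2) := by
    have h1 : ((m:ℝ)+1) ≠ 0 := by positivity
    have h2 : ((m:ℝ)+2) ≠ 0 := by positivity
    have h3 : (Nat.factorial m : ℝ) ≠ 0 := by positivity
    simp only [hBdef, hcdef, sub_self, hfacs]
    norm_num
    field_simp
    ring
  have := hψ1
  rw [hψdef] at this
  simp only [hφ1, hφ0, Real.norm_eq_abs] at this
  rw [hB1] at this
  simpa [hv] using this

end

theorem tensor_contraction {E : Type*} [NormedAddCommGroup E]
    [InnerProductSpace ℝ E] [FiniteDimensional ℝ E]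
    (f : E → ℝ) (xs : E) (p q : ℕ) (μ L M : ℝ)
    (hq : 2 ≤ q) (hpq : q ≤ p) (hμ : 0 < μ)
    (hmin : ∀ y : E, f xs ≤ f y)
    (hsc : UniformlyStarConvex f xs q μ)
    (hf : HasLipschitzDeriv f p L)
    (hM : ((p : ℝ) - 1) * L ≤ M)
    (x xp : E) (hstep : IsTensorStep f p M x xp) :
    ∀ α : ℝ, 0 ≤ α → α ≤ 1 →
      α ^ p * ((q : ℝ) * (M + L) / ((Nat.factorial (p + 1) : ℝ) * μ)) *
          ‖x - xs‖ ^ (p - q + 1) + α - 1 ≤ 0 →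
      f xp - f xs ≤ (1 - α) * (f x - f xs) := by
  intro α hα0 hα1 hαc
  rcases subsingleton_or_nontrivial E with hE | hE
  · have h1 : xp = xs := Subsingleton.elim _ _
    have h2 : x = xs := Subsingleton.elim _ _
    rw [h1, h2]
    simp
  obtain ⟨hC, hLip⟩ := hf
  -- L ≥ 0
  obtain ⟨v, hv⟩ := exists_ne (0 : E)
  have hL0 : 0 ≤ L := by
    have h1 := (norm_nonneg (iteratedFDeriv ℝ p f v - iteratedFDeriv ℝ p f 0)).trans (hLip v 0)
    have h2 : 0 < ‖v - 0‖ := by simpa [sub_zero] using norm_pos_iff.mpr hv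
    nlinarith
  have hp2 : 2 ≤ p := le_trans hq hpq
  have hML : L ≤ M := by
    have : (2:ℝ) ≤ (p:ℝ) := by exact_mod_cast hp2
    nlinarith
  obtain ⟨m, rfl⟩ : ∃ m, p = m + 1 := ⟨p - 1, by omega⟩
  have hT : ∀ z : E, |f z - taylorPoly f (m+1) x z|
      ≤ L / (Nat.factorial (m+2) : ℝ) * ‖z - x‖ ^ (m+2) :=
    taylor_rem_bound f m L hC hLip x
  set A : ℝ := (Nat.factorial (m+1+1) : ℝ) with hA
  have hA0 : 0 < A := by positivity
  have hAe : (Nat.factorial (m+2) : ℝ) = A := by norm_num [hA]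
  set y := (1-α) • x + α • xs with hy
  have hyx : ‖y - x‖ = α * ‖x - xs‖ := by
    have h1 : y - x = α • (xs - x) := by rw [hy]; module
    rw [h1, norm_smul, Real.norm_eq_abs, abs_of_nonneg hα0, norm_sub_rev]
  -- key1 : f xp ≤ tensorModel
  have hTxp := abs_le.mp (hT xp)
  have hTy := abs_le.mp (hT y)
  have key1 : f xp ≤ tensorModel f (m+1) M x xp := by
    have h1 : f xp ≤ taylorPoly f (m+1) x xp + L / A * ‖xp - x‖ ^ (m+2) := by
      have := hTxp.2; linarith
    have h2 : L / A * ‖xp - x‖ ^ (m+2) ≤ M / A * ‖xp - x‖ ^ (m+2) := by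
      apply mul_le_mul_of_nonneg_right _ (by positivity)
      exact div_le_div_of_nonneg_right hML hA0.le
    calc f xp ≤ taylorPoly f (m+1) x xp + M / A * ‖xp - x‖ ^ (m+2) := by linarith
      _ = tensorModel f (m+1) M x xp := by rw [tensorModel]
  have key2 := hstep y
  have key3 : tensorModel f (m+1) M x y ≤ f y + (M + L) / A * ‖y - x‖ ^ (m+2) := by
    have h1 : taylorPoly f (m+1) x y ≤ f y + L / A * ‖y - x‖ ^ (m+2) := by
      have := hTy.1; linarith
    have h2 : tensorModel f (m+1) M x y
        = taylorPoly f (m+1) x y + M / A * ‖y - x‖ ^ (m+2) := by rw [tensorModel]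
    rw [h2]
    have : L / A * ‖y - x‖ ^ (m+2) + M / A * ‖y - x‖ ^ (m+2)
        = (M + L) / A * ‖y - x‖ ^ (m+2) := by ring
    linarith
  -- star convexity
  have key5 := hsc x (1-α) (by linarith) (by linarith)
  rw [sub_sub_cancel] at key5
  -- combine
  set r : ℝ := ‖x - xs‖ with hr
  have hr0 : 0 ≤ r := norm_nonneg _
  have hq0 : (0:ℝ) < (q:ℝ) := by positivity
  have hfxp : f xp ≤ (1-α) * f x + α * f xs - (1-α) * α * μ / q * r ^ q
      + (M + L) / A * (α * r) ^ (m+2) := by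
    have h4 : ‖y - x‖ ^ (m+2) = (α * r) ^ (m+2) := by rw [hyx]
    have := key1.trans (key2.trans key3)
    rw [h4] at this
    linarith
  -- the crucial inequality
  have hqle : q ≤ m + 1 := hpq
  have hrpow : r ^ (m + 1 - q + 1) * r ^ q = r ^ (m+2) := by
    rw [← pow_add]; congr 1; omega
  have hcond : α ^ (m+1) * ((q : ℝ) * (M + L) / (A * μ)) * r ^ (m + 1 - q + 1) ≤ 1 - α := by
    linarith
  have hmul := mul_le_mul_of_nonneg_left hcond
    (show (0:ℝ) ≤ α * (μ / q) * r ^ q by positivity)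
  have heq : α * (μ / q) * r ^ q * (α ^ (m+1) * ((q : ℝ) * (M + L) / (A * μ)) * r ^ (m+1-q+1))
      = (M + L) / A * (α * r) ^ (m+2) := by
    have hμ' : μ ≠ 0 := ne_of_gt hμ
    have hq' : (q:ℝ) ≠ 0 := ne_of_gt hq0
    have hA' : A ≠ 0 := ne_of_gt hA0
    rw [mul_pow, ← hrpow]
    field_simp
    ring
  have hkey : (M + L) / A * (α * r) ^ (m+2) ≤ (1 - α) * (α * (μ / q) * r ^ q) := by
    rw [← heq]; linarith [hmul]
  have hfin : (1-α) * α * μ / q * r ^ q = (1 - α) * (α * (μ / q) * r ^ q) := by ring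
  have hexp : (1-α) * f x + α * f xs - f xs = (1-α) * (f x - f xs) := by ring
  linarith [hfxp, hkey, hfin]
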